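/- Let z₁, z₂ ∈ ℤ with sharings [z₁] = (z₁⁽¹⁾, z₁⁽²⁾) and [z₂] = (z₂⁽¹⁾, z₂⁽²⁾), and let [α], [β], [γ] be sharings of a Beaver triple with α·β ≡ γ (mod q). Define δ := (z₁⁽¹⁾ - α⁽¹⁾) + (z₁⁽²⁾ - α⁽²⁾) mod q and ε := (z₂⁽¹⁾ - β⁽¹⁾) + (z₂⁽²⁾ - β⁽²⁾) mod q. Define shares z₅⁽¹⁾ := (γ⁽¹⁾ + δ·β⁽¹⁾ + ε·α⁽¹⁾ + δ·ε) mod q and z₅⁽²⁾ := (γ⁽²⁾ + δ·β⁽²⁾ + ε·α⁽²⁾) mod q. Then z₅⁽¹⁾ + z₅⁽²⁾ ≡ z₁·z₂ (mod q). -/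
import Mathlib


theorem stmt_4 (q : ℕ) (hq : 0 < q) (z₁ z₂ α β γ : ℤ)
    (z₁₁ z₁₂ z₂₁ z₂₂ α₁ α₂ β₁ β₂ γ₁ γ₂ : ℤ)
    (h₁₁ : 0 ≤ z₁₁ ∧ z₁₁ < q) (h₁₂ : 0 ≤ z₁₂ ∧ z₁₂ < q)
    (h₂₁ : 0 ≤ z₂₁ ∧ z₂₁ < q) (h₂₂ : 0 ≤ z₂₂ ∧ z₂₂ < q)
    (hα₁ : 0 ≤ α₁ ∧ α₁ < q) (hα₂ : 0 ≤ α₂ ∧ α₂ < q)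
    (hβ₁ : 0 ≤ β₁ ∧ β₁ < q) (hβ₂ : 0 ≤ β₂ ∧ β₂ < q)
    (hγ₁ : 0 ≤ γ₁ ∧ γ₁ < q) (hγ₂ : 0 ≤ γ₂ ∧ γ₂ < q)
    (hz₁ : z₁ ≡ z₁₁ + z₁₂ [ZMOD q]) (hz₂ : z₂ ≡ z₂₁ + z₂₂ [ZMOD q])
    (hα : α ≡ α₁ + α₂ [ZMOD q]) (hβ : β ≡ β₁ + β₂ [ZMOD q])
    (hγ : γ ≡ γ₁ + γ₂ [ZMOD q]) (hbeaver : α * β ≡ γ [ZMOD q])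
    (δ ε : ℤ)
    (hδ : δ = ((z₁₁ - α₁) + (z₁₂ - α₂)) % q)
    (hε : ε = ((z₂₁ - β₁) + (z₂₂ - β₂)) % q) :
    (γ₁ + δ * β₁ + ε * α₁ + δ * ε) % q + (γ₂ + δ * β₂ + ε * α₂) % q
      ≡ z₁ * z₂ [ZMOD q] := by
  have hm : ∀ a : ℤ, a % (q:ℤ) ≡ a [ZMOD (q:ℤ)] := fun a => Int.emod_emod_of_dvd a dvd_rfl
  have hδ' : δ ≡ z₁ - α [ZMOD q] := by
    rw [hδ]
    calc ((z₁₁ - α₁) + (z₁₂ - α₂)) % q ≡ (z₁₁ - α₁) + (z₁₂ - α₂) [ZMOD q] :=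
          Int.emod_emod_of_dvd _ dvd_rfl
      _ ≡ z₁ - α [ZMOD q] := by
          have := (hz₁.sub hα).symm
          simpa [add_sub_add_comm] using this
  have hε' : ε ≡ z₂ - β [ZMOD q] := by
    rw [hε]
    calc ((z₂₁ - β₁) + (z₂₂ - β₂)) % q ≡ (z₂₁ - β₁) + (z₂₂ - β₂) [ZMOD q] :=
          Int.emod_emod_of_dvd _ dvd_rfl
      _ ≡ z₂ - β [ZMOD q] := by
          have := (hz₂.sub hβ).symm
          simpa [add_sub_add_comm] using this
  calc (γ₁ + δ * β₁ + ε * α₁ + δ * ε) % q + (γ₂ + δ * β₂ + ε * α₂) % q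
      ≡ (γ₁ + δ * β₁ + ε * α₁ + δ * ε) + (γ₂ + δ * β₂ + ε * α₂) [ZMOD q] :=
        (hm _).add (hm _)
    _ = (γ₁ + γ₂) + δ * (β₁ + β₂) + ε * (α₁ + α₂) + δ * ε := by ring
    _ ≡ γ + (z₁ - α) * β + (z₂ - β) * α + (z₁ - α) * (z₂ - β) [ZMOD q] :=
        (((hγ.symm.add (hδ'.mul hβ.symm)).add (hε'.mul hα.symm)).add (hδ'.mul hε'))
    _ = (α * β - γ) * (-1) + z₁ * z₂ := by ring
    _ ≡ (γ - γ) * (-1) + z₁ * z₂ [ZMOD q] := by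
        exact ((hbeaver.sub (Int.ModEq.refl γ)).mul_right _).add_right _
    _ = z₁ * z₂ := by ring
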